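/- The additive subgroup Λ of ℝ³ generated by λ1, λ2, λ3 equals the body-centered cubic lattice {√2·(a,b,c) : a,b,c ∈ ℤ, a ≡ b (mod 2) and b ≡ c (mod 2)}. -/
import Mathlib


noncomputable section

def lam1 : Fin 3 → ℝ := Real.sqrt 2 • ![1, -1, -1]
def lam2 : Fin 3 → ℝ := Real.sqrt 2 • ![-1, 1, -1]
def lam3 : Fin 3 → ℝ := Real.sqrt 2 • ![-1, -1, 1]

/-- The additive subgroup Λ of ℝ³ generated by λ1, λ2, λ3. -/
def Lambda : AddSubgroup (Fin 3 → ℝ) := AddSubgroup.closure {lam1, lam2, lam3}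

def bccSet : Set (Fin 3 → ℝ) :=
  {x | ∃ a b c : ℤ, a ≡ b [ZMOD 2] ∧ b ≡ c [ZMOD 2] ∧
    x = Real.sqrt 2 • ![(a : ℝ), (b : ℝ), (c : ℝ)]}

def bccGroup : AddSubgroup (Fin 3 → ℝ) where
  carrier := bccSet
  zero_mem' := by
    refine ⟨0, 0, 0, Int.ModEq.refl _, Int.ModEq.refl _, ?_⟩
    funext i
    fin_cases i <;> simp
  add_mem' := by
    rintro x y ⟨a, b, c, hab, hbc, rfl⟩ ⟨a', b', c', hab', hbc', rfl⟩
    refine ⟨a + a', b + b', c + c', hab.add hab', hbc.add hbc', ?_⟩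
    funext i
    fin_cases i <;> simp <;> push_cast <;> ring
  neg_mem' := by
    rintro x ⟨a, b, c, hab, hbc, rfl⟩
    refine ⟨-a, -b, -c, hab.neg, hbc.neg, ?_⟩
    funext i
    fin_cases i <;> simp <;> push_cast <;> ring

lemma lam1_mem : lam1 ∈ bccSet := by
  refine ⟨1, -1, -1, by decide, by decide, ?_⟩
  funext i
  fin_cases i <;> simp [lam1]

lemma lam2_mem : lam2 ∈ bccSet := by
  refine ⟨-1, 1, -1, by decide, by decide, ?_⟩
  funext i
  fin_cases i <;> simp [lam2]

lemma lam3_mem : lam3 ∈ bccSet := by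
  refine ⟨-1, -1, 1, by decide, by decide, ?_⟩
  funext i
  fin_cases i <;> simp [lam3]

/-- Λ equals the body-centered cubic lattice
`{√2·(a,b,c) : a,b,c ∈ ℤ, a ≡ b (mod 2), b ≡ c (mod 2)}`. -/
theorem lattice_eq_bcc :
    (Lambda : Set (Fin 3 → ℝ)) =
      {x | ∃ a b c : ℤ, a ≡ b [ZMOD 2] ∧ b ≡ c [ZMOD 2] ∧
        x = Real.sqrt 2 • ![(a : ℝ), (b : ℝ), (c : ℝ)]} := by
  apply Set.Subset.antisymm
  · intro x hx
    have : Lambda ≤ bccGroup := by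
      apply AddSubgroup.closure_le bccGroup |>.2
      intro y hy
      rcases hy with rfl | rfl | rfl
      · exact lam1_mem
      · exact lam2_mem
      · exact lam3_mem
    exact this hx
  · rintro x ⟨a, b, c, hab, hbc, rfl⟩
    -- get half-sums
    have h1 : (2 : ℤ) ∣ (b + c) := by
      have := Int.ModEq.dvd hbc
      omega
    have h2 : (2 : ℤ) ∣ (a + c) := by
      have := Int.ModEq.dvd (hab.trans hbc)
      omega
    have h3 : (2 : ℤ) ∣ (a + b) := by
      have := Int.ModEq.dvd hab
      omega
    obtain ⟨k1, hk1⟩ := h1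
    obtain ⟨k2, hk2⟩ := h2
    obtain ⟨k3, hk3⟩ := h3
    have ha : a = k2 + k3 - k1 := by omega
    have hb : b = k1 + k3 - k2 := by omega
    have hc : c = k1 + k2 - k3 := by omega
    subst ha hb hc
    have hmem : Real.sqrt 2 • ![((k2 + k3 - k1 : ℤ) : ℝ), ((k1 + k3 - k2 : ℤ) : ℝ), ((k1 + k2 - k3 : ℤ) : ℝ)]
        = (-k1) • lam1 + (-k2) • lam2 + (-k3) • lam3 := by
      funext i
      fin_cases i <;>
        simp [lam1, lam2, lam3, Pi.smul_apply, zsmul_eq_mul] <;> push_cast <;> ring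
    rw [hmem]
    have m1 : lam1 ∈ Lambda := AddSubgroup.subset_closure (by simp)
    have m2 : lam2 ∈ Lambda := AddSubgroup.subset_closure (by simp)
    have m3 : lam3 ∈ Lambda := AddSubgroup.subset_closure (by simp)
    exact add_mem (add_mem (zsmul_mem m1 _) (zsmul_mem m2 _)) (zsmul_mem m3 _)

end
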